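/- Let k be a field, n ≥ 1, and A = k⟨x₁,…,x_n⟩/(x_j x_p − x₁ x_p : 2 ≤ j ≤ n, 1 ≤ p ≤ n) the Yang–Baxter algebra of a permutation idempotent solution of order n. For every integer d ≥ 2, the assignment x_i ↦ x₁^{d−1} x_i (the image in A of the word with d−1 copies of x₁ followed by x_i) extends to a well-defined k-algebra homomorphism v_{n,d} : A → A (the (n,d)-Veronese map), and v_{n,d} is injective. Its image equals the d-Veronese subalgebra A^{(d)} of A, namely the k-linear span in A of the images of all words whose length is a multiple of d; equivalently, the image is the subalgebra of A generated by {x₁^{d−1} x_i : 1 ≤ i ≤ n}. In particular, the d-Veronese subalgebra A^{(d)} is isomorphic to A as a k-algebra. -/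

import Mathlib

noncomputable section

open FreeAlgebra

/-- The standard defining relations `x_j x_p = x₁ x_p` (`j ≠ 1`) of the Yang–Baxter
algebra of a permutation idempotent solution of order `n`. -/
def stdRel (k : Type*) [Field k] (n : ℕ) [NeZero n] :
    FreeAlgebra k (Fin n) → FreeAlgebra k (Fin n) → Prop :=
  fun a b => ∃ j p : Fin n, j ≠ 0 ∧ a = ι k j * ι k p ∧ b = ι k (0 : Fin n) * ι k p

/-- The Yang–Baxter algebra `A(k,n) = k⟨x₁,…,xₙ⟩/(x_j x_p − x₁ x_p)`. -/
abbrev StdYBA (k : Type*) [Field k] (n : ℕ) [NeZero n] := RingQuot (stdRel k n)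

/-- The image of the generator `x_i` in `A(k,n)`. -/
def sx (k : Type*) [Field k] (n : ℕ) [NeZero n] (i : Fin n) : StdYBA k n :=
  RingQuot.mkAlgHom k (stdRel k n) (ι k i)

/-- The image in `A(k,n)` of the word indexed by the list `w`. -/
def sword (k : Type*) [Field k] (n : ℕ) [NeZero n] (w : List (Fin n)) : StdYBA k n :=
  RingQuot.mkAlgHom k (stdRel k n) ((w.map (ι k)).prod)

namespace Stmt18

/-- The semigroup of normal-form words `x₀^m x_i` (`m` = first component). -/
def Sg (n : ℕ) := ℕ × Fin n

instance (n : ℕ) : Mul (Sg n) := ⟨fun a b => (a.1 + b.1 + 1, b.2)⟩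

lemma Sg.mul_def {n : ℕ} (a b : Sg n) : a * b = (a.1 + b.1 + 1, b.2) := rfl

instance (n : ℕ) : Semigroup (Sg n) where
  mul_assoc a b c := by show ((_,_) : Sg n) = (_,_); simp [Sg.mul_def]; omega

variable (k : Type*) [Field k] (n : ℕ) [NeZero n]

lemma rel_sx (j p : Fin n) : sx k n j * sx k n p = sx k n 0 * sx k n p := by
  rcases eq_or_ne j 0 with h | h
  · rw [h]
  · unfold sx
    rw [← map_mul, ← map_mul]
    exact RingQuot.mkAlgHom_rel k ⟨j, p, h, rfl, rfl⟩

lemma key0 (i : Fin n) (a : StdYBA k n) :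
    sx k n i * (sx k n 0 * a) = sx k n 0 * (sx k n 0 * a) := by
  rw [← mul_assoc, rel_sx k n i 0, mul_assoc]

lemma key (i j : Fin n) (l : ℕ) :
    sx k n i * ((sx k n 0) ^ l * sx k n j) = (sx k n 0) ^ (l + 1) * sx k n j := by
  cases l with
  | zero => simpa using rel_sx k n i j
  | succ m =>
    simp only [pow_succ', mul_assoc]
    exact key0 k n i _

lemma sg_mul (i j : Fin n) (m l : ℕ) :
    ((sx k n 0) ^ m * sx k n i) * ((sx k n 0) ^ l * sx k n j)
      = (sx k n 0) ^ (m + l + 1) * sx k n j := by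
  rw [mul_assoc, key, ← mul_assoc, ← pow_add, ← add_assoc]

/-- normal form as a multiplicative map from the semigroup. -/
def sgToA : Sg n →ₙ* StdYBA k n where
  toFun a := (sx k n 0) ^ a.1 * sx k n a.2
  map_mul' a b := by
    rw [Sg.mul_def]
    exact (sg_mul k n a.2 b.2 a.1 b.1).symm

/-- `ψ : MonoidAlgebra k (WithOne (Sg n)) →ₐ[k] StdYBA k n`. -/
def ψ : MonoidAlgebra k (WithOne (Sg n)) →ₐ[k] StdYBA k n :=
  MonoidAlgebra.lift k (StdYBA k n) (WithOne (Sg n)) (WithOne.lift (sgToA k n))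

lemma ψ_of (a : Sg n) :
    ψ k n (MonoidAlgebra.of k (WithOne (Sg n)) (WithOne.coe a))
      = (sx k n 0) ^ a.1 * sx k n a.2 := by
  rw [ψ, MonoidAlgebra.lift_of, WithOne.lift_coe]
  rfl

/-- `φ : StdYBA k n →ₐ[k] MonoidAlgebra k (WithOne (Sg n))`. -/
def φ : StdYBA k n →ₐ[k] MonoidAlgebra k (WithOne (Sg n)) :=
  RingQuot.liftAlgHom k
    ⟨FreeAlgebra.lift k fun i =>
        MonoidAlgebra.of k (WithOne (Sg n)) (WithOne.coe ((0, i) : Sg n)), by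
      rintro a b ⟨j, p, hj, rfl, rfl⟩
      simp only [map_mul, FreeAlgebra.lift_ι_apply]
      rw [← map_mul, ← map_mul]
      rfl⟩

lemma φ_sx (i : Fin n) :
    φ k n (sx k n i)
      = MonoidAlgebra.of k (WithOne (Sg n)) (WithOne.coe ((0, i) : Sg n)) := by
  rw [sx, φ, RingQuot.liftAlgHom_mkAlgHom_apply, FreeAlgebra.lift_ι_apply]

lemma of_pow (m : ℕ) (i : Fin n) :
    (MonoidAlgebra.of k (WithOne (Sg n)) (WithOne.coe ((0, 0) : Sg n))) ^ m *
        MonoidAlgebra.of k (WithOne (Sg n)) (WithOne.coe ((0, i) : Sg n))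
      = MonoidAlgebra.of k (WithOne (Sg n)) (WithOne.coe ((m, i) : Sg n)) := by
  induction m with
  | zero => simp
  | succ m ih =>
    rw [pow_succ', mul_assoc, ih, ← map_mul]
    erw [← WithOne.coe_mul, Sg.mul_def]
    norm_num

lemma comp1 : (ψ k n).comp (φ k n) = AlgHom.id k (StdYBA k n) := by
  apply RingQuot.ringQuot_ext'
  apply FreeAlgebra.hom_ext
  funext i
  show ψ k n (φ k n (sx k n i)) = sx k n i
  rw [φ_sx]
  erw [ψ_of]
  simp

lemma comp2 : (φ k n).comp (ψ k n) = AlgHom.id k (MonoidAlgebra k (WithOne (Sg n))) := by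
  apply MonoidAlgebra.algHom_ext
  intro x
  induction x with
  | one => simp [← MonoidAlgebra.of_apply]
  | coe a =>
    rw [← MonoidAlgebra.of_apply]
    show φ k n (ψ k n _) = _
    rw [ψ_of, map_mul, map_pow, φ_sx, φ_sx, of_pow]
    rfl
  exact Subsingleton.elim _ _

lemma φ_inj : Function.Injective (φ k n) := by
  have h : ∀ x, ψ k n (φ k n x) = x := fun x => by
    have := congrArg (fun f => f x) (comp1 k n); simpa using this
  exact Function.LeftInverse.injective h

lemma ψ_inj : Function.Injective (ψ k n) := by
  have h : ∀ x, φ k n (ψ k n x) = x := fun x => by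
    have := congrArg (fun f => f x) (comp2 k n); simpa using this
  exact Function.LeftInverse.injective h


variable (d : ℕ)

/-- degree-multiplication semigroup endomorphism `(m,i) ↦ (m d + d − 1, i)`. -/
def gmap (hd : 2 ≤ d) : Sg n →ₙ* Sg n where
  toFun a := (a.1 * d + (d - 1), a.2)
  map_mul' a b := by
    show ((_,_) : Sg n) = (_,_)
    simp only [Prod.mk.injEq]
    refine ⟨?_, rfl⟩
    show (a.1 + b.1 + 1) * d + (d - 1) = (a.1 * d + (d - 1)) + (b.1 * d + (d - 1)) + 1
    rw [add_mul, add_mul, one_mul]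
    omega

lemma gmap_inj (hd : 2 ≤ d) : Function.Injective (gmap n d hd) := by
  intro a b h
  have h1' := congrArg (Prod.fst : Sg n → ℕ) h
  have h2' := congrArg (Prod.snd : Sg n → Fin n) h
  have h1 : a.1 * d + (d - 1) = b.1 * d + (d - 1) := h1'
  have h2 : a.2 = b.2 := h2'
  have h4 : a.1 * d = b.1 * d := by omega
  have h3 : a.1 = b.1 := Nat.eq_of_mul_eq_mul_right (by omega) h4
  exact Prod.ext h3 h2

lemma wmap_inj (hd : 2 ≤ d) :
    Function.Injective (WithOne.mapMulHom (gmap n d hd)) := by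
  intro a b h
  induction a with
  | one =>
    induction b with
    | one => rfl
    | coe b => rw [map_one, WithOne.mapMulHom_coe] at h; exact absurd h.symm (WithOne.coe_ne_one)
  | coe a =>
    induction b with
    | one => rw [map_one, WithOne.mapMulHom_coe] at h; exact absurd h (WithOne.coe_ne_one)
    | coe b =>
      rw [WithOne.mapMulHom_coe, WithOne.mapMulHom_coe] at h
      rw [gmap_inj n d hd (WithOne.coe_inj.mp h)]

/-- The Veronese map `v : x_i ↦ x₀^{d-1} x_i`. -/
def v (hd : 2 ≤ d) : StdYBA k n →ₐ[k] StdYBA k n :=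
  RingQuot.liftAlgHom k
    ⟨FreeAlgebra.lift k fun i => (sx k n 0) ^ (d - 1) * sx k n i, by
      rintro a b ⟨j, p, hj, rfl, rfl⟩
      simp only [map_mul, FreeAlgebra.lift_ι_apply]
      rw [sg_mul, sg_mul]⟩

lemma v_sx (hd : 2 ≤ d) (i : Fin n) :
    v k n d hd (sx k n i) = (sx k n 0) ^ (d - 1) * sx k n i := by
  rw [sx, v, RingQuot.liftAlgHom_mkAlgHom_apply, FreeAlgebra.lift_ι_apply]
  rfl

lemma v_eq (hd : 2 ≤ d) :
    v k n d hd = (ψ k n).comp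
      ((MonoidAlgebra.mapDomainAlgHom k k (WithOne.mapMulHom (gmap n d hd))).comp (φ k n)) := by
  apply RingQuot.ringQuot_ext'
  apply FreeAlgebra.hom_ext
  funext i
  show v k n d hd (sx k n i) = ψ k n (MonoidAlgebra.mapDomainAlgHom k k
      (WithOne.mapMulHom (gmap n d hd)) (φ k n (sx k n i)))
  rw [v_sx, φ_sx]
  rw [MonoidAlgebra.mapDomainAlgHom_apply]
  rw [show (MonoidAlgebra.of k (WithOne (Sg n)) (WithOne.coe ((0, i) : Sg n)))
      = MonoidAlgebra.single (WithOne.coe ((0, i) : Sg n)) 1 from rfl]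
  erw [MonoidAlgebra.mapDomain_single, WithOne.mapMulHom_coe]
  rw [show ((gmap n d hd) ((0, i) : Sg n)) = ((d - 1, i) : Sg n) by
    show ((_, _) : Sg n) = _; simp [gmap]]
  show _ = ψ k n (MonoidAlgebra.of k (WithOne (Sg n)) (WithOne.coe ((d - 1, i) : Sg n)))
  erw [ψ_of]

lemma v_inj (hd : 2 ≤ d) : Function.Injective (v k n d hd) := by
  rw [v_eq]
  simp only [AlgHom.coe_comp]
  apply (ψ_inj k n).comp
  apply Function.Injective.comp ?_ (φ_inj k n)
  intro x y h
  simp only [MonoidAlgebra.mapDomainAlgHom_apply] at h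
  exact MonoidAlgebra.mapDomain_injective (wmap_inj n d hd) h


lemma sword_nil : sword k n ([] : List (Fin n)) = 1 := by simp [sword]

lemma sword_cons (j : Fin n) (w : List (Fin n)) :
    sword k n (j :: w) = sx k n j * sword k n w := by
  simp [sword, sx, map_mul]

lemma sword_append (w w' : List (Fin n)) :
    sword k n (w ++ w') = sword k n w * sword k n w' := by
  simp [sword, map_mul]

lemma sword_concat (w : List (Fin n)) (i : Fin n) :
    sword k n (w ++ [i]) = (sx k n 0) ^ w.length * sx k n i := by
  induction w with
  | nil => simp [sword_cons, sword_nil]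
  | cons j w ih =>
    rw [List.cons_append, sword_cons, ih, key]
    simp

lemma top_eq : (⊤ : Subalgebra k (StdYBA k n)) = Algebra.adjoin k (Set.range (sx k n)) := by
  have h1 : Set.range (sx k n) = (RingQuot.mkAlgHom k (stdRel k n)) '' (Set.range (ι k)) := by
    rw [← Set.range_comp]; rfl
  rw [h1, ← AlgHom.map_adjoin, FreeAlgebra.adjoin_range_ι, Algebra.map_top]
  exact ((AlgHom.range_eq_top _).mpr (RingQuot.mkAlgHom_surjective k _)).symm

lemma range_v (hd : 2 ≤ d) :
    (v k n d hd).range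
      = Algebra.adjoin k (Set.range fun i : Fin n => (sx k n 0) ^ (d - 1) * sx k n i) := by
  rw [← Algebra.map_top, top_eq, AlgHom.map_adjoin, ← Set.range_comp]
  congr 1
  exact congrArg Set.range (funext fun i => v_sx k n d hd i)

/-- The set of (images of) words whose length is divisible by `d`. -/
def W : Set (StdYBA k n) :=
  {a : StdYBA k n | ∃ w : List (Fin n), d ∣ w.length ∧ a = sword k n w}

lemma one_mem_spanW : (1 : StdYBA k n) ∈ Submodule.span k (W k n d) :=
  Submodule.subset_span ⟨[], by simp, (sword_nil k n).symm⟩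

lemma spanW_mul : ∀ x y : StdYBA k n, x ∈ Submodule.span k (W k n d) →
    y ∈ Submodule.span k (W k n d) → x * y ∈ Submodule.span k (W k n d) := by
  intro x y hx hy
  have h : Submodule.span k (W k n d) * Submodule.span k (W k n d)
      ≤ Submodule.span k (W k n d) := by
    rw [Submodule.span_mul_span]
    apply Submodule.span_le.mpr
    rintro z ⟨a, ha, b, hb, rfl⟩
    obtain ⟨w, hw, rfl⟩ := ha
    obtain ⟨w', hw', rfl⟩ := hb
    exact Submodule.subset_span
      ⟨w ++ w', by simpa using dvd_add hw hw', (sword_append k n w w').symm⟩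
  exact h (Submodule.mul_mem_mul hx hy)

lemma pow_mem_adjoin (hd : 2 ≤ d) (m : ℕ) (i : Fin n) :
    (sx k n 0) ^ (m * d + (d - 1)) * sx k n i ∈
      Algebra.adjoin k (Set.range fun i : Fin n => (sx k n 0) ^ (d - 1) * sx k n i) := by
  induction m with
  | zero =>
    have h0 : (0 : ℕ) * d + (d - 1) = d - 1 := by omega
    rw [h0]
    exact Algebra.subset_adjoin ⟨i, rfl⟩
  | succ m ih =>
    have e : (d - 1) + (m * d + (d - 1)) + 1 = (m + 1) * d + (d - 1) := by
      rw [add_mul, one_mul]; omega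
    have h2 : (sx k n 0) ^ ((m + 1) * d + (d - 1)) * sx k n i
        = ((sx k n 0) ^ (d - 1) * sx k n 0) * ((sx k n 0) ^ (m * d + (d - 1)) * sx k n i) := by
      rw [sg_mul, e]
    rw [h2]
    exact mul_mem (Algebra.subset_adjoin ⟨0, rfl⟩) ih

lemma W_subset_adjoin (hd : 2 ≤ d) :
    W k n d ⊆
      (Algebra.adjoin k (Set.range fun i : Fin n => (sx k n 0) ^ (d - 1) * sx k n i) :
        Set (StdYBA k n)) := by
  rintro a ⟨w, hw, rfl⟩
  rcases eq_or_ne w [] with rfl | hne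
  · rw [sword_nil]
    exact (Algebra.adjoin k _).one_mem
  · obtain ⟨c, hc⟩ := hw
    have hc1 : 1 ≤ c := by
      rcases Nat.eq_zero_or_pos c with rfl | h
      · exact absurd (List.length_eq_zero_iff.mp (by simpa using hc)) hne
      · exact h
    have hw2 : w.dropLast ++ [w.getLast hne] = w := List.dropLast_append_getLast hne
    rw [← hw2, sword_concat]
    have hlen : w.dropLast.length = (c - 1) * d + (d - 1) := by
      rw [List.length_dropLast, hc]
      obtain ⟨c', rfl⟩ : ∃ c', c = c' + 1 := ⟨c - 1, by omega⟩
      rw [Nat.mul_succ, Nat.add_sub_cancel, Nat.mul_comm]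
      omega
    rw [hlen]
    exact pow_mem_adjoin k n d hd (c - 1) _

lemma gen_mem_spanW (hd : 2 ≤ d) (i : Fin n) :
    (sx k n 0) ^ (d - 1) * sx k n i ∈ Submodule.span k (W k n d) := by
  have h : (sx k n 0) ^ (d - 1) * sx k n i = sword k n (List.replicate (d - 1) 0 ++ [i]) := by
    rw [sword_concat, List.length_replicate]
  rw [h]
  refine Submodule.subset_span ⟨List.replicate (d - 1) 0 ++ [i], ?_, rfl⟩
  have : (List.replicate (d - 1) (0 : Fin n) ++ [i]).length = d := by
    simp; omega
  rw [this]

lemma adjoin_eq_spanW (hd : 2 ≤ d) :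
    ((Algebra.adjoin k (Set.range fun i : Fin n => (sx k n 0) ^ (d - 1) * sx k n i) :
        Subalgebra k (StdYBA k n)) : Set (StdYBA k n))
      = ((Submodule.span k (W k n d) : Submodule k (StdYBA k n)) : Set (StdYBA k n)) := by
  apply Set.Subset.antisymm
  · have hle : Algebra.adjoin k (Set.range fun i : Fin n => (sx k n 0) ^ (d - 1) * sx k n i)
        ≤ (Submodule.span k (W k n d)).toSubalgebra (one_mem_spanW k n d) (spanW_mul k n d) := by
      apply Algebra.adjoin_le
      rintro g ⟨i, rfl⟩
      exact gen_mem_spanW k n d hd i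
    exact fun x hx => hle hx
  · intro x hx
    have hle : Submodule.span k (W k n d) ≤ Subalgebra.toSubmodule
        (Algebra.adjoin k (Set.range fun i : Fin n => (sx k n 0) ^ (d - 1) * sx k n i)) :=
      Submodule.span_le.mpr (W_subset_adjoin k n d hd)
    exact hle hx

end Stmt18

/-- for every `d ≥ 2` the assignment `x_i ↦ x₁^{d−1} x_i` extends to a
well-defined injective `k`-algebra endomorphism `v_{n,d}` of `A(k,n)` whose image is
the `d`-Veronese subalgebra `A^{(d)}` (the span of images of words of length divisible
by `d`), which is also the subalgebra generated by `{x₁^{d−1} x_i}`; in particular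
`A^{(d)} ≅ A`. -/
theorem stmt_18 (k : Type*) [Field k] (n : ℕ) [NeZero n] (d : ℕ) (hd : 2 ≤ d) :
    ∃ v : StdYBA k n →ₐ[k] StdYBA k n,
      (∀ i : Fin n, v (sx k n i) = (sx k n 0) ^ (d - 1) * sx k n i) ∧
      Function.Injective v ∧
      ((v.range : Set (StdYBA k n)) =
        ((Submodule.span k
          {a : StdYBA k n | ∃ w : List (Fin n), d ∣ w.length ∧ a = sword k n w} :
            Submodule k (StdYBA k n)) : Set (StdYBA k n))) ∧
      v.range = Algebra.adjoin k (Set.range fun i : Fin n =>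
        (sx k n 0) ^ (d - 1) * sx k n i) := by
  refine ⟨Stmt18.v k n d hd, Stmt18.v_sx k n d hd, Stmt18.v_inj k n d hd, ?_,
    Stmt18.range_v k n d hd⟩
  rw [Stmt18.range_v k n d hd]
  exact Stmt18.adjoin_eq_spanW k n d hd

end
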